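/- arXiv:1912.03443 — 2 statements merged into one kernel-verified Lean document; each statement's English description precedes it below -/
import Mathlib

section
/- (Covariance of the sampled-join SUM and COUNT, part of the AVG variance theorem.) In the UBS sum sampling model, with C = Z the sampled-join count and S the sampled-join sum (built from the same random family), Cov(S, C) = p q₁ q₂ · [ (1−q₂)·q₁·Σ_v (a v)² μ_v (b v) + (1−q₁)·q₂·Σ_v (a v) μ_v (b v)² + (1−q₁)(1−q₂)·Σ_v (a v) μ_v (b v) + (1−p)·q₁ q₂·Σ_v (a v)² μ_v (b v)² ]. -/
open MeasureTheory ProbabilityTheory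

/-- Mean `μ_v` of the weights attached to the tuples of the first table with join key `v`
(`0` when there are no such tuples). -/
noncomputable def wMean {ι : Type*} (a : ι → ℕ) (w : (v : ι) → Fin (a v) → ℝ) (v : ι) : ℝ :=
  (∑ i, w v i) / (a v)

/-- Population variance `σ_v²` of the weights attached to the tuples of the first table with
join key `v` (`0` when there are no such tuples). -/
noncomputable def wVar {ι : Type*} (a : ι → ℕ) (w : (v : ι) → Fin (a v) → ℝ) (v : ι) : ℝ :=
  (∑ i, (w v i - wMean a w v) ^ 2) / (a v)


section Aux
variable {Ω : Type*} [MeasurableSpace Ω] {μ : Measure Ω} [IsProbabilityMeasure μ]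
variable {κ : Type*} {F : κ → Ω → ℝ}

lemma mul01' {x y : ℝ} (hx : x = 0 ∨ x = 1) (hy : y = 0 ∨ y = 1) : x * y = 0 ∨ x * y = 1 := by
  rcases hx with h | h <;> rcases hy with h' | h' <;> simp [h, h']

omit [MeasurableSpace Ω] in
lemma prod01 (h01 : ∀ k ω, F k ω = 0 ∨ F k ω = 1) (s : Finset κ) (ω : Ω) :
    (∏ k ∈ s, F k ω) = 0 ∨ (∏ k ∈ s, F k ω) = 1 := by
  classical
  induction s using Finset.induction_on with
  | empty => simp
  | insert _ _ hy =>
    rename_i y t iht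
    rw [Finset.prod_insert hy]
    exact mul01' (h01 y ω) iht

lemma integrable01 {g : Ω → ℝ} (hm : Measurable g) (h01 : ∀ ω, g ω = 0 ∨ g ω = 1) :
    Integrable g μ := by
  apply (integrable_const (1:ℝ)).mono' hm.aestronglyMeasurable
  filter_upwards with ω
  rcases h01 ω with h | h <;> simp [h]

omit [IsProbabilityMeasure μ] in
lemma integral_of_01 {g : Ω → ℝ} (hm : Measurable g) (h01 : ∀ ω, g ω = 0 ∨ g ω = 1)
    {c : ℝ} (hc : 0 ≤ c) (hμ : μ {ω | g ω = 1} = ENNReal.ofReal c) :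
    ∫ ω, g ω ∂μ = c := by
  have hset : MeasurableSet {ω | g ω = 1} := hm (measurableSet_singleton 1)
  have hg : g = Set.indicator {ω | g ω = 1} (fun _ => (1:ℝ)) := by
    funext ω
    rcases h01 ω with h | h <;> simp [Set.indicator, h]
  rw [show (∫ ω, g ω ∂μ) = ∫ ω, Set.indicator {ω | g ω = 1} (fun _ => (1:ℝ)) ω ∂μ by rw [← hg]]
  rw [integral_indicator_const _ hset]
  simp [Measure.real, hμ, ENNReal.toReal_ofReal hc]

lemma integral_finset_prod01 (hm : ∀ k, Measurable (F k)) (h01 : ∀ k ω, F k ω = 0 ∨ F k ω = 1)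
    (hInd : iIndepFun F μ) (s : Finset κ) :
    ∫ ω, ∏ k ∈ s, F k ω ∂μ = ∏ k ∈ s, ∫ ω, F k ω ∂μ := by
  classical
  induction s using Finset.induction_on with
  | empty => simp
  | insert _ _ hx =>
    rename_i x s ih
    have hmprod : Measurable fun ω => ∏ k ∈ s, F k ω := Finset.measurable_prod _ fun k _ => hm k
    have hindep : IndepFun (∏ j ∈ s, F j) (F x) μ :=
      hInd.indepFun_finsetProd_of_notMem hm hx
    have hfn : (∏ j ∈ s, F j) = fun ω => ∏ k ∈ s, F k ω := by
      funext ω; simp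
    have h2 := hindep.symm.integral_mul_eq_mul_integral (hm x).aestronglyMeasurable
      (by rw [hfn]; exact hmprod.aestronglyMeasurable)
    have hfn2 : (F x * ∏ j ∈ s, F j) = fun ω => F x ω * ∏ k ∈ s, F k ω := by
      funext ω; simp
    rw [hfn2, hfn] at h2
    simp only [Finset.prod_insert hx]
    rw [← ih]
    exact h2

end Aux
section Aux2
variable {Ω : Type*} [MeasurableSpace Ω] {μ : Measure Ω} [IsProbabilityMeasure μ]
variable {κ : Type*} {F : κ → Ω → ℝ}

omit [MeasurableSpace Ω] in
lemma prod_pair01 [DecidableEq κ] (h01 : ∀ k ω, F k ω = 0 ∨ F k ω = 1) (k₁ k₂ : κ) (ω : Ω) :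
    (∏ k ∈ ({k₁, k₂} : Finset κ), F k ω) = F k₁ ω * F k₂ ω := by
  by_cases h : k₁ = k₂
  · subst h
    rcases h01 k₁ ω with h' | h' <;> simp [h']
  · rw [Finset.prod_pair h]

lemma pairP (g : κ → ℝ) (k₁ k₂ : κ) [DecidableEq κ] :
    (∏ k ∈ ({k₁, k₂} : Finset κ), g k) = if k₁ = k₂ then g k₁ else g k₁ * g k₂ := by
  by_cases h : k₁ = k₂
  · subst h; simp
  · rw [Finset.prod_pair h, if_neg h]

lemma integral_six01 [DecidableEq κ] (hm : ∀ k, Measurable (F k))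
    (h01 : ∀ k ω, F k ω = 0 ∨ F k ω = 1)
    (hInd : iIndepFun F μ)
    (k₁ k₂ k₃ k₄ k₅ k₆ : κ)
    (h13 : k₁ ≠ k₃) (h14 : k₁ ≠ k₄) (h23 : k₂ ≠ k₃) (h24 : k₂ ≠ k₄)
    (h15 : k₁ ≠ k₅) (h16 : k₁ ≠ k₆) (h25 : k₂ ≠ k₅) (h26 : k₂ ≠ k₆)
    (h35 : k₃ ≠ k₅) (h36 : k₃ ≠ k₆) (h45 : k₄ ≠ k₅) (h46 : k₄ ≠ k₆) :
    ∫ ω, F k₁ ω * F k₂ ω * (F k₃ ω * F k₄ ω) * (F k₅ ω * F k₆ ω) ∂μ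
      = (if k₁ = k₂ then ∫ ω, F k₁ ω ∂μ else (∫ ω, F k₁ ω ∂μ) * ∫ ω, F k₂ ω ∂μ)
      * (if k₃ = k₄ then ∫ ω, F k₃ ω ∂μ else (∫ ω, F k₃ ω ∂μ) * ∫ ω, F k₄ ω ∂μ)
      * (if k₅ = k₆ then ∫ ω, F k₅ ω ∂μ else (∫ ω, F k₅ ω ∂μ) * ∫ ω, F k₆ ω ∂μ) := by
  have hd12 : Disjoint ({k₁, k₂} : Finset κ) {k₃, k₄} := by
    rw [Finset.disjoint_left]
    rintro x hx hx'
    simp only [Finset.mem_insert, Finset.mem_singleton] at hx hx'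
    rcases hx with rfl | rfl <;> rcases hx' with h | h <;> simp_all
  have hd3 : Disjoint (({k₁, k₂} : Finset κ) ∪ {k₃, k₄}) {k₅, k₆} := by
    rw [Finset.disjoint_left]
    rintro x hx hx'
    simp only [Finset.mem_union, Finset.mem_insert, Finset.mem_singleton] at hx hx'
    rcases hx with (rfl | rfl) | (rfl | rfl) <;> rcases hx' with h | h <;> simp_all
  have key : ∀ ω, F k₁ ω * F k₂ ω * (F k₃ ω * F k₄ ω) * (F k₅ ω * F k₆ ω)
      = ∏ k ∈ (({k₁, k₂} : Finset κ) ∪ {k₃, k₄} ∪ {k₅, k₆}), F k ω := by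
    intro ω
    rw [Finset.prod_union hd3, Finset.prod_union hd12,
      prod_pair01 h01, prod_pair01 h01, prod_pair01 h01]
  calc ∫ ω, F k₁ ω * F k₂ ω * (F k₃ ω * F k₄ ω) * (F k₅ ω * F k₆ ω) ∂μ
      = ∫ ω, ∏ k ∈ (({k₁, k₂} : Finset κ) ∪ {k₃, k₄} ∪ {k₅, k₆}), F k ω ∂μ := by
        simp only [key]
    _ = ∏ k ∈ (({k₁, k₂} : Finset κ) ∪ {k₃, k₄} ∪ {k₅, k₆}), ∫ ω, F k ω ∂μ :=
        integral_finset_prod01 hm h01 hInd _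
    _ = _ := by
        rw [Finset.prod_union hd3, Finset.prod_union hd12, pairP, pairP, pairP]

lemma integral_three01 [DecidableEq κ] (hm : ∀ k, Measurable (F k))
    (h01 : ∀ k ω, F k ω = 0 ∨ F k ω = 1)
    (hInd : iIndepFun F μ)
    (k₁ k₂ k₃ : κ) (h12 : k₁ ≠ k₂) (h13 : k₁ ≠ k₃) (h23 : k₂ ≠ k₃) :
    ∫ ω, F k₁ ω * F k₂ ω * F k₃ ω ∂μ
      = (∫ ω, F k₁ ω ∂μ) * (∫ ω, F k₂ ω ∂μ) * ∫ ω, F k₃ ω ∂μ := by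
  have key : ∀ ω, F k₁ ω * F k₂ ω * F k₃ ω = ∏ k ∈ ({k₁, k₂, k₃} : Finset κ), F k ω := by
    intro ω
    rw [Finset.prod_insert (by simp [h12, h13]), Finset.prod_pair h23, mul_assoc]
  calc ∫ ω, F k₁ ω * F k₂ ω * F k₃ ω ∂μ
      = ∫ ω, ∏ k ∈ ({k₁, k₂, k₃} : Finset κ), F k ω ∂μ := by simp only [key]
    _ = ∏ k ∈ ({k₁, k₂, k₃} : Finset κ), ∫ ω, F k ω ∂μ := integral_finset_prod01 hm h01 hInd _
    _ = _ := by
        rw [Finset.prod_insert (by simp [h12, h13]), Finset.prod_pair h23, mul_assoc]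
end Aux2


lemma ite_sum_fin (k : ℕ) (t : Fin k) (x y : ℝ) :
    (∑ t' : Fin k, if t = t' then x else y) = y * k + (x - y) := by
  rw [Finset.sum_congr rfl (fun t' _ => show (if t = t' then x else y) = y + (if t = t' then x - y else 0) by split <;> ring),
    Finset.sum_add_distrib, Finset.sum_const, Finset.sum_ite_eq, Finset.card_univ, Fintype.card_fin]
  simp [nsmul_eq_mul]
  ring

lemma quad_sum_const (m m' n n' : ℕ) (w : Fin m → ℝ) (c : ℝ) :
    (∑ i : Fin m, ∑ _i' : Fin m', ∑ _j : Fin n, ∑ _j' : Fin n', w i * c)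
      = (∑ i, w i) * c * m' * ((n : ℝ) * n') := by
  have h : ∀ i : Fin m, (∑ _i' : Fin m', ∑ _j : Fin n, ∑ _j' : Fin n', w i * c)
      = w i * (c * m' * ((n:ℝ) * n')) := by
    intro i
    simp [Finset.sum_const, Finset.card_univ, nsmul_eq_mul]
    ring
  rw [Finset.sum_congr rfl fun i _ => h i, ← Finset.sum_mul]
  ring

lemma quad_sum (m n : ℕ) (w : Fin m → ℝ) (c x₁ y₁ x₂ y₂ : ℝ) :
    (∑ i : Fin m, ∑ i' : Fin m, ∑ j : Fin n, ∑ j' : Fin n,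
        w i * (c * (if i = i' then x₁ else y₁) * (if j = j' then x₂ else y₂)))
      = (∑ i, w i) * c * (y₁ * m + (x₁ - y₁)) * ((n : ℝ) * (y₂ * n + (x₂ - y₂))) := by
  have hJ : (∑ j : Fin n, ∑ j' : Fin n, (if j = j' then x₂ else y₂))
      = (n : ℝ) * (y₂ * n + (x₂ - y₂)) := by
    simp [ite_sum_fin, Finset.sum_const, Finset.card_univ]
    ring
  have step1 : (∑ i : Fin m, ∑ i' : Fin m, ∑ j : Fin n, ∑ j' : Fin n,
        w i * (c * (if i = i' then x₁ else y₁) * (if j = j' then x₂ else y₂)))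
      = ∑ i : Fin m, ∑ i' : Fin m, (w i * (c * (if i = i' then x₁ else y₁)))
          * ((n : ℝ) * (y₂ * n + (x₂ - y₂))) := by
    refine Finset.sum_congr rfl fun i _ => Finset.sum_congr rfl fun i' _ => ?_
    rw [← hJ, Finset.mul_sum]
    refine Finset.sum_congr rfl fun j _ => ?_
    rw [Finset.mul_sum]
    refine Finset.sum_congr rfl fun j' _ => ?_
    ring
  have step2 : ∀ i : Fin m, (∑ i' : Fin m, w i * (c * (if i = i' then x₁ else y₁)))
      = w i * c * (y₁ * m + (x₁ - y₁)) := by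
    intro i
    rw [← ite_sum_fin m i x₁ y₁, Finset.mul_sum]
    refine Finset.sum_congr rfl fun i' _ => by ring
  have step3 : ∀ i : Fin m, (∑ i' : Fin m, (w i * (c * (if i = i' then x₁ else y₁)))
        * ((n : ℝ) * (y₂ * n + (x₂ - y₂))))
      = (w i * c * (y₁ * m + (x₁ - y₁))) * ((n : ℝ) * (y₂ * n + (x₂ - y₂))) := by
    intro i
    rw [← Finset.sum_mul, step2 i]
  rw [step1, Finset.sum_congr rfl fun i _ => step3 i, ← Finset.sum_mul]
  have : (∑ i : Fin m, w i * c * (y₁ * m + (x₁ - y₁)))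
      = (∑ i, w i) * c * (y₁ * m + (x₁ - y₁)) := by
    rw [← Finset.sum_mul, ← Finset.sum_mul]
  rw [this]

/-- **Covariance of the sampled-join SUM and COUNT.**  With `C` the sampled-join count and
`S` the sampled-join sum built from the same UBS random family,
`Cov(S, C) = p q₁ q₂ · [(1−q₂) q₁ ∑ a_v² μ_v b_v + (1−q₁) q₂ ∑ a_v μ_v b_v²
+ (1−q₁)(1−q₂) ∑ a_v μ_v b_v + (1−p) q₁ q₂ ∑ a_v² μ_v b_v²]`
(covariance written as `E[SC] − E[S]E[C]`). -/
theorem covariance_sampled_sum_count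
    {Ω : Type*} [MeasurableSpace Ω] (μ : Measure Ω) [IsProbabilityMeasure μ]
    {ι : Type*} [Fintype ι]
    (a b : ι → ℕ) (w : (v : ι) → Fin (a v) → ℝ) (p q₁ q₂ : ℝ)
    (hp : 0 < p) (hp1 : p ≤ 1) (hq₁ : 0 < q₁) (hq₁1 : q₁ ≤ 1) (hq₂ : 0 < q₂) (hq₂1 : q₂ ≤ 1)
    (U : ι → Ω → ℝ) (ξ : (v : ι) → Fin (a v) → Ω → ℝ) (η : (v : ι) → Fin (b v) → Ω → ℝ)
    (hUm : ∀ v, Measurable (U v))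
    (hξm : ∀ v i, Measurable (ξ v i))
    (hηm : ∀ v j, Measurable (η v j))
    (hU01 : ∀ v ω, U v ω = 0 ∨ U v ω = 1)
    (hξ01 : ∀ v i ω, ξ v i ω = 0 ∨ ξ v i ω = 1)
    (hη01 : ∀ v j ω, η v j ω = 0 ∨ η v j ω = 1)
    (hUp : ∀ v, μ {ω | U v ω = 1} = ENNReal.ofReal p)
    (hξq : ∀ v i, μ {ω | ξ v i ω = 1} = ENNReal.ofReal q₁)
    (hηq : ∀ v j, μ {ω | η v j ω = 1} = ENNReal.ofReal q₂)
    (hIndep : iIndepFun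
      (Sum.elim (fun v : ι => U v)
        (Sum.elim (fun vi : Σ v : ι, Fin (a v) => ξ vi.1 vi.2)
                  (fun vj : Σ v : ι, Fin (b v) => η vj.1 vj.2))) μ) :
    (∫ ω, (∑ v, U v ω * (∑ i, ξ v i ω * w v i) * (∑ j, η v j ω)) *
          (∑ v, U v ω * (∑ i, ξ v i ω) * (∑ j, η v j ω)) ∂μ)
      - (∫ ω, ∑ v, U v ω * (∑ i, ξ v i ω * w v i) * (∑ j, η v j ω) ∂μ) *
        (∫ ω, ∑ v, U v ω * (∑ i, ξ v i ω) * (∑ j, η v j ω) ∂μ)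
      = p * q₁ * q₂ *
          ((1 - q₂) * q₁ * (∑ v, (a v : ℝ) ^ 2 * wMean a w v * (b v : ℝ))
            + (1 - q₁) * q₂ * (∑ v, (a v : ℝ) * wMean a w v * (b v : ℝ) ^ 2)
            + (1 - q₁) * (1 - q₂) * (∑ v, (a v : ℝ) * wMean a w v * (b v : ℝ))
            + (1 - p) * q₁ * q₂ * (∑ v, (a v : ℝ) ^ 2 * wMean a w v * (b v : ℝ) ^ 2)) := by
  classical
  set F : (ι ⊕ ((Σ v : ι, Fin (a v)) ⊕ (Σ v : ι, Fin (b v)))) → Ω → ℝ :=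
    Sum.elim (fun v : ι => U v)
      (Sum.elim (fun vi : Σ v : ι, Fin (a v) => ξ vi.1 vi.2)
                (fun vj : Σ v : ι, Fin (b v) => η vj.1 vj.2)) with hFdef
  have hm : ∀ k, Measurable (F k) := by
    rintro (v | vi | vj)
    · exact hUm v
    · exact hξm vi.1 vi.2
    · exact hηm vj.1 vj.2
  have h01 : ∀ k ω, F k ω = 0 ∨ F k ω = 1 := by
    rintro (v | vi | vj) ω
    · exact hU01 v ω
    · exact hξ01 vi.1 vi.2 ω
    · exact hη01 vj.1 vj.2 ω
  have hU1 : ∀ v, ∫ ω, U v ω ∂μ = p := fun v => integral_of_01 (hUm v) (hU01 v) hp.le (hUp v)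
  have hξ1 : ∀ v i, ∫ ω, ξ v i ω ∂μ = q₁ :=
    fun v i => integral_of_01 (hξm v i) (hξ01 v i) hq₁.le (hξq v i)
  have hη1 : ∀ v j, ∫ ω, η v j ω ∂μ = q₂ :=
    fun v j => integral_of_01 (hηm v j) (hη01 v j) hq₂.le (hηq v j)
  -- monomial expectations
  have hM3 : ∀ v i j, ∫ ω, U v ω * ξ v i ω * η v j ω ∂μ = p * q₁ * q₂ := by
    intro v i j
    have h := integral_three01 hm h01 hIndep (Sum.inl v) (Sum.inr (Sum.inl ⟨v, i⟩))
      (Sum.inr (Sum.inr ⟨v, j⟩)) (by simp) (by simp) (by simp)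
    simp only [hFdef, Sum.elim_inl, Sum.elim_inr] at h
    rw [h, hU1, hξ1, hη1]
  have hM6 : ∀ (v v' : ι) (i : Fin (a v)) (i' : Fin (a v')) (j : Fin (b v)) (j' : Fin (b v')),
      ∫ ω, U v ω * U v' ω * (ξ v i ω * ξ v' i' ω) * (η v j ω * η v' j' ω) ∂μ
        = (if v = v' then p else p * p)
          * (if (⟨v, i⟩ : Σ v : ι, Fin (a v)) = ⟨v', i'⟩ then q₁ else q₁ * q₁)
          * (if (⟨v, j⟩ : Σ v : ι, Fin (b v)) = ⟨v', j'⟩ then q₂ else q₂ * q₂) := by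
    intro v v' i i' j j'
    have h := integral_six01 hm h01 hIndep (Sum.inl v) (Sum.inl v')
      (Sum.inr (Sum.inl ⟨v, i⟩)) (Sum.inr (Sum.inl ⟨v', i'⟩))
      (Sum.inr (Sum.inr ⟨v, j⟩)) (Sum.inr (Sum.inr ⟨v', j'⟩))
      (by simp) (by simp) (by simp) (by simp) (by simp) (by simp)
      (by simp) (by simp) (by simp) (by simp) (by simp) (by simp)
    simp only [hFdef, Sum.elim_inl, Sum.elim_inr, Sum.inl.injEq, Sum.inr.injEq,
      hU1, hξ1, hη1] at h
    exact h
  -- integrability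
  have hInt3 : ∀ v i j, Integrable (fun ω => U v ω * ξ v i ω * η v j ω) μ :=
    fun v i j => integrable01 (((hUm v).mul (hξm v i)).mul (hηm v j))
      (fun ω => mul01' (mul01' (hU01 v ω) (hξ01 v i ω)) (hη01 v j ω))
  have hInt6 : ∀ (v v' : ι) (i : Fin (a v)) (i' : Fin (a v')) (j : Fin (b v)) (j' : Fin (b v')),
      Integrable (fun ω => U v ω * U v' ω * (ξ v i ω * ξ v' i' ω) * (η v j ω * η v' j' ω)) μ :=
    fun v v' i i' j j' => integrable01
      ((((hUm v).mul (hUm v')).mul ((hξm v i).mul (hξm v' i'))).mul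
        ((hηm v j).mul (hηm v' j')))
      (fun ω => mul01' (mul01' (mul01' (hU01 v ω) (hU01 v' ω))
        (mul01' (hξ01 v i ω) (hξ01 v' i' ω))) (mul01' (hη01 v j ω) (hη01 v' j' ω)))
  -- pointwise expansions of a single factor
  have hfac1 : ∀ (v : ι) (ω : Ω), U v ω * (∑ i, ξ v i ω * w v i) * (∑ j, η v j ω)
      = ∑ i, ∑ j, (U v ω * (ξ v i ω * w v i)) * η v j ω := by
    intro v ω
    rw [show U v ω * (∑ i, ξ v i ω * w v i) = ∑ i, U v ω * (ξ v i ω * w v i) from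
      Finset.mul_sum _ _ _, Finset.sum_mul]
    exact Finset.sum_congr rfl fun i _ => Finset.mul_sum _ _ _
  have hfac2 : ∀ (v : ι) (ω : Ω), U v ω * (∑ i, ξ v i ω) * (∑ j, η v j ω)
      = ∑ i, ∑ j, (U v ω * ξ v i ω) * η v j ω := by
    intro v ω
    rw [show U v ω * (∑ i, ξ v i ω) = ∑ i, U v ω * ξ v i ω from
      Finset.mul_sum _ _ _, Finset.sum_mul]
    exact Finset.sum_congr rfl fun i _ => Finset.mul_sum _ _ _
  -- expectation of S
  have hES : (∫ ω, ∑ v, U v ω * (∑ i, ξ v i ω * w v i) * (∑ j, η v j ω) ∂μ)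
      = ∑ v, p * q₁ * q₂ * ((∑ i, w v i) * (b v : ℝ)) := by
    have hptw : (fun ω => ∑ v, U v ω * (∑ i, ξ v i ω * w v i) * (∑ j, η v j ω))
        = fun ω => ∑ v, ∑ i, ∑ j, w v i * (U v ω * ξ v i ω * η v j ω) := by
      funext ω
      refine Finset.sum_congr rfl fun v _ => ?_
      rw [hfac1 v ω]
      refine Finset.sum_congr rfl fun i _ => Finset.sum_congr rfl fun j _ => by ring
    rw [hptw, integral_finset_sum _ (fun v _ => integrable_finset_sum _ (fun i _ =>
      integrable_finset_sum _ (fun j _ => (hInt3 v i j).const_mul _)))]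
    refine Finset.sum_congr rfl fun v _ => ?_
    rw [integral_finset_sum _ (fun i _ => integrable_finset_sum _
      (fun j _ => (hInt3 v i j).const_mul _))]
    have : ∀ i : Fin (a v), (∫ ω, ∑ j, w v i * (U v ω * ξ v i ω * η v j ω) ∂μ)
        = w v i * ((p * q₁ * q₂) * (b v : ℝ)) := by
      intro i
      rw [integral_finset_sum _ (fun j _ => (hInt3 v i j).const_mul _)]
      rw [Finset.sum_congr rfl fun j _ => by rw [integral_const_mul, hM3 v i j]]
      simp [Finset.sum_const, Finset.card_univ, nsmul_eq_mul]
      ring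
    rw [Finset.sum_congr rfl fun i _ => this i, ← Finset.sum_mul]
    ring
  -- expectation of C
  have hEC : (∫ ω, ∑ v, U v ω * (∑ i, ξ v i ω) * (∑ j, η v j ω) ∂μ)
      = ∑ v, p * q₁ * q₂ * ((a v : ℝ) * (b v : ℝ)) := by
    have hptw : (fun ω => ∑ v, U v ω * (∑ i, ξ v i ω) * (∑ j, η v j ω))
        = fun ω => ∑ v, ∑ i, ∑ j, U v ω * ξ v i ω * η v j ω := by
      funext ω
      refine Finset.sum_congr rfl fun v _ => ?_
      rw [hfac2 v ω]
    rw [hptw, integral_finset_sum _ (fun v _ => integrable_finset_sum _ (fun i _ =>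
      integrable_finset_sum _ (fun j _ => hInt3 v i j)))]
    refine Finset.sum_congr rfl fun v _ => ?_
    rw [integral_finset_sum _ (fun i _ => integrable_finset_sum _ (fun j _ => hInt3 v i j))]
    rw [Finset.sum_congr rfl fun i _ => by
      rw [integral_finset_sum _ (fun j _ => hInt3 v i j),
        Finset.sum_congr rfl fun j _ => hM3 v i j]]
    simp [Finset.sum_const, Finset.card_univ, nsmul_eq_mul]
    ring
  -- expectation of S*C
  have hESC : (∫ ω, (∑ v, U v ω * (∑ i, ξ v i ω * w v i) * (∑ j, η v j ω)) *
          (∑ v, U v ω * (∑ i, ξ v i ω) * (∑ j, η v j ω)) ∂μ)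
      = ∑ v, ∑ v', ∑ i, ∑ i', ∑ j, ∑ j',
          w v i * ((if v = v' then p else p * p)
            * (if (⟨v, i⟩ : Σ v : ι, Fin (a v)) = ⟨v', i'⟩ then q₁ else q₁ * q₁)
            * (if (⟨v, j⟩ : Σ v : ι, Fin (b v)) = ⟨v', j'⟩ then q₂ else q₂ * q₂)) := by
    have hptw : (fun ω => (∑ v, U v ω * (∑ i, ξ v i ω * w v i) * (∑ j, η v j ω)) *
            (∑ v, U v ω * (∑ i, ξ v i ω) * (∑ j, η v j ω)))
        = fun ω => ∑ v, ∑ v', ∑ i, ∑ i', ∑ j, ∑ j',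
            w v i * (U v ω * U v' ω * (ξ v i ω * ξ v' i' ω) * (η v j ω * η v' j' ω)) := by
      funext ω
      rw [Finset.sum_mul_sum]
      refine Finset.sum_congr rfl fun v _ => Finset.sum_congr rfl fun v' _ => ?_
      rw [hfac1 v ω, hfac2 v' ω, Finset.sum_mul_sum]
      refine Finset.sum_congr rfl fun i _ => Finset.sum_congr rfl fun i' _ => ?_
      rw [Finset.sum_mul_sum]
      refine Finset.sum_congr rfl fun j _ => Finset.sum_congr rfl fun j' _ => by ring
    rw [hptw, integral_finset_sum _ (fun v _ => integrable_finset_sum _ (fun v' _ =>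
      integrable_finset_sum _ (fun i _ => integrable_finset_sum _ (fun i' _ =>
      integrable_finset_sum _ (fun j _ => integrable_finset_sum _ (fun j' _ =>
      (hInt6 v v' i i' j j').const_mul _))))))]
    refine Finset.sum_congr rfl fun v _ => ?_
    rw [integral_finset_sum _ (fun v' _ => integrable_finset_sum _ (fun i _ =>
      integrable_finset_sum _ (fun i' _ => integrable_finset_sum _ (fun j _ =>
      integrable_finset_sum _ (fun j' _ => (hInt6 v v' i i' j j').const_mul _)))))]
    refine Finset.sum_congr rfl fun v' _ => ?_
    rw [integral_finset_sum _ (fun i _ => integrable_finset_sum _ (fun i' _ =>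
      integrable_finset_sum _ (fun j _ => integrable_finset_sum _ (fun j' _ =>
      (hInt6 v v' i i' j j').const_mul _))))]
    refine Finset.sum_congr rfl fun i _ => ?_
    rw [integral_finset_sum _ (fun i' _ => integrable_finset_sum _ (fun j _ =>
      integrable_finset_sum _ (fun j' _ => (hInt6 v v' i i' j j').const_mul _)))]
    refine Finset.sum_congr rfl fun i' _ => ?_
    rw [integral_finset_sum _ (fun j _ => integrable_finset_sum _ (fun j' _ =>
      (hInt6 v v' i i' j j').const_mul _))]
    refine Finset.sum_congr rfl fun j _ => ?_
    rw [integral_finset_sum _ (fun j' _ => (hInt6 v v' i i' j j').const_mul _)]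
    refine Finset.sum_congr rfl fun j' _ => ?_
    rw [integral_const_mul, hM6 v v' i i' j j']
  -- the W identity
  have hW : ∀ v, (a v : ℝ) * wMean a w v = ∑ i, w v i := by
    intro v
    by_cases h : a v = 0
    · haveI : IsEmpty (Fin (a v)) := by rw [h]; infer_instance
      simp [wMean, h]
    · rw [wMean, mul_comm, div_mul_cancel₀]
      exact Nat.cast_ne_zero.mpr h
  -- assemble
  rw [hES, hEC, hESC, Finset.sum_mul_sum, ← Finset.sum_sub_distrib]
  rw [Finset.sum_congr rfl fun v (_ : v ∈ Finset.univ) => (Finset.sum_sub_distrib _ _).symm]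
  have hRHS : p * q₁ * q₂ *
          ((1 - q₂) * q₁ * (∑ v, (a v : ℝ) ^ 2 * wMean a w v * (b v : ℝ))
            + (1 - q₁) * q₂ * (∑ v, (a v : ℝ) * wMean a w v * (b v : ℝ) ^ 2)
            + (1 - q₁) * (1 - q₂) * (∑ v, (a v : ℝ) * wMean a w v * (b v : ℝ))
            + (1 - p) * q₁ * q₂ * (∑ v, (a v : ℝ) ^ 2 * wMean a w v * (b v : ℝ) ^ 2))
      = ∑ v, p * q₁ * q₂ *
          ((1 - q₂) * q₁ * ((a v : ℝ) ^ 2 * wMean a w v * (b v : ℝ))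
            + (1 - q₁) * q₂ * ((a v : ℝ) * wMean a w v * (b v : ℝ) ^ 2)
            + (1 - q₁) * (1 - q₂) * ((a v : ℝ) * wMean a w v * (b v : ℝ))
            + (1 - p) * q₁ * q₂ * ((a v : ℝ) ^ 2 * wMean a w v * (b v : ℝ) ^ 2)) := by
    simp only [Finset.mul_sum, mul_add, Finset.sum_add_distrib]
  rw [hRHS]
  refine Finset.sum_congr rfl fun v _ => ?_
  rw [Finset.sum_eq_single v ?_ (by simp)]
  · -- diagonal term
    have hdiag : (∑ i, ∑ i', ∑ j, ∑ j',
          w v i * ((if v = v then p else p * p)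
            * (if (⟨v, i⟩ : Σ v : ι, Fin (a v)) = ⟨v, i'⟩ then q₁ else q₁ * q₁)
            * (if (⟨v, j⟩ : Σ v : ι, Fin (b v)) = ⟨v, j'⟩ then q₂ else q₂ * q₂)))
        = (∑ i, w v i) * p * ((q₁ * q₁) * (a v) + (q₁ - q₁ * q₁))
            * ((b v : ℝ) * ((q₂ * q₂) * (b v) + (q₂ - q₂ * q₂))) := by
      simp only [Sigma.mk.inj_iff, heq_eq_eq, true_and, eq_self_iff_true, if_true]
      rw [quad_sum (a v) (b v) (w v) p q₁ (q₁ * q₁) q₂ (q₂ * q₂)]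
    rw [hdiag, ← hW v]
    ring
  · -- off-diagonal terms vanish
    intro v' _ hv'
    have hvv' : v ≠ v' := fun h => hv' h.symm
    have hoff : (∑ i, ∑ i', ∑ j, ∑ j',
          w v i * ((if v = v' then p else p * p)
            * (if (⟨v, i⟩ : Σ v : ι, Fin (a v)) = ⟨v', i'⟩ then q₁ else q₁ * q₁)
            * (if (⟨v, j⟩ : Σ v : ι, Fin (b v)) = ⟨v', j'⟩ then q₂ else q₂ * q₂)))
        = (∑ i, w v i) * ((p * p) * (q₁ * q₁) * (q₂ * q₂)) * (a v' : ℝ)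
            * ((b v : ℝ) * (b v' : ℝ)) := by
      simp only [Sigma.mk.inj_iff, hvv', false_and, if_false, if_neg hvv']
      exact quad_sum_const (a v) (a v') (b v) (b v') (w v) ((p * p) * (q₁ * q₁) * (q₂ * q₂))
    rw [hoff]
    ring
end

section
/- (Matching the lower bound up to a constant for primary-key joins.) In the UBS sampling model, suppose a_v ≤ 1 for every v ∈ ι (a primary-key table T₁), let ε ∈ (0,1], and take universe rate p = ε and uniform rates q₁ = q₂ = 1. Then Var(Ĵ_count) = (1/ε − 1)·Σ_{v∈ι} (a v)·(b v)². In particular, if additionally b_v ≤ c for every v and some natural c, then Var(Ĵ_count) ≤ c·(1/ε − 1)·J, where J = Σ_v (a v)(b v) is the join size. -/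
open MeasureTheory ProbabilityTheory

private lemma variance_congr_ae' {Ω : Type*} [MeasurableSpace Ω] {μ : Measure Ω} {f g : Ω → ℝ}
    (h : f =ᵐ[μ] g) : variance f μ = variance g μ := by
  unfold ProbabilityTheory.variance ProbabilityTheory.evariance
  rw [integral_congr_ae h]
  congr 1
  apply lintegral_congr_ae
  filter_upwards [h] with ω hω
  rw [hω]

private lemma bernoulli_memℒp' {Ω : Type*} [MeasurableSpace Ω] {μ : Measure Ω}
    [IsProbabilityMeasure μ] {X : Ω → ℝ} (hm : Measurable X) (h01 : ∀ ω, X ω = 0 ∨ X ω = 1) :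
    MemLp X 2 μ := by
  refine (memLp_top_of_bound hm.aestronglyMeasurable 1
    (Filter.Eventually.of_forall fun ω => ?_)).mono_exponent le_top
  rcases h01 ω with h | h <;> simp [h]

private lemma bernoulli_variance' {Ω : Type*} [MeasurableSpace Ω] {μ : Measure Ω}
    [IsProbabilityMeasure μ] {X : Ω → ℝ} (hm : Measurable X) (h01 : ∀ ω, X ω = 0 ∨ X ω = 1)
    {ε : ℝ} (hε : 0 ≤ ε) (hp : μ {ω | X ω = 1} = ENNReal.ofReal ε) :
    variance X μ = ε - ε ^ 2 := by
  have hset : MeasurableSet {ω | X ω = 1} := hm (measurableSet_singleton 1)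
  have hind : X = Set.indicator {ω | X ω = 1} (fun _ => (1:ℝ)) := by
    ext ω
    rcases h01 ω with h | h <;> simp [Set.indicator_apply, h]
  have hint : μ[X] = ε := by
    rw [hind, integral_indicator_const (1:ℝ) hset, measureReal_def, hp, ENNReal.toReal_ofReal hε]
    simp
  have hsq : (X ^ 2 : Ω → ℝ) = X := by
    ext ω
    rcases h01 ω with h | h <;> simp [h]
  rw [variance_eq_sub (bernoulli_memℒp' hm h01), hsq, hint]

/-- **Matching the lower bound up to a constant for primary-key joins.**
In the UBS sampling model with `a_v ≤ 1` for all `v` (a primary-key table `T₁`), universe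
rate `p = ε` and uniform rates `q₁ = q₂ = 1`, the count estimator has variance
`(1/ε − 1)·∑ v, a_v b_v²`; in particular, if `b_v ≤ c` for all `v`, the variance is at most
`c·(1/ε − 1)·J` where `J = ∑ v, a_v b_v` is the join size. -/
theorem pk_join_variance_matches_lower_bound
    {Ω : Type*} [MeasurableSpace Ω] (μ : Measure Ω) [IsProbabilityMeasure μ]
    {ι : Type*} [Fintype ι]
    (a b : ι → ℕ) (ha : ∀ v, a v ≤ 1) (ε : ℝ)
    (hε : 0 < ε) (hε1 : ε ≤ 1)
    (U : ι → Ω → ℝ) (ξ : (v : ι) → Fin (a v) → Ω → ℝ) (η : (v : ι) → Fin (b v) → Ω → ℝ)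
    (hUm : ∀ v, Measurable (U v))
    (hξm : ∀ v i, Measurable (ξ v i))
    (hηm : ∀ v j, Measurable (η v j))
    (hU01 : ∀ v ω, U v ω = 0 ∨ U v ω = 1)
    (hξ01 : ∀ v i ω, ξ v i ω = 0 ∨ ξ v i ω = 1)
    (hη01 : ∀ v j ω, η v j ω = 0 ∨ η v j ω = 1)
    (hUp : ∀ v, μ {ω | U v ω = 1} = ENNReal.ofReal ε)
    (hξq : ∀ v i, μ {ω | ξ v i ω = 1} = ENNReal.ofReal 1)
    (hηq : ∀ v j, μ {ω | η v j ω = 1} = ENNReal.ofReal 1)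
    (hIndep : iIndepFun (m := fun _ => (inferInstance : MeasurableSpace ℝ))
      (Sum.elim (fun v : ι => U v)
        (Sum.elim (fun vi : Σ v : ι, Fin (a v) => ξ vi.1 vi.2)
                  (fun vj : Σ v : ι, Fin (b v) => η vj.1 vj.2))) μ) :
    variance (fun ω => (1 / (ε * 1 * 1)) *
        ∑ v, U v ω * (∑ i, ξ v i ω) * (∑ j, η v j ω)) μ
      = (1 / ε - 1) * (∑ v, (a v : ℝ) * (b v : ℝ) ^ 2) ∧
    (∀ c : ℕ, (∀ v, b v ≤ c) →
      variance (fun ω => (1 / (ε * 1 * 1)) *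
          ∑ v, U v ω * (∑ i, ξ v i ω) * (∑ j, η v j ω)) μ
        ≤ (c : ℝ) * (1 / ε - 1) * (∑ v, (a v : ℝ) * (b v : ℝ))) := by
  classical
  -- ξ and η are a.s. equal to 1
  have hξ1 : ∀ v i, ∀ᵐ ω ∂μ, ξ v i ω = 1 := by
    intro v i
    have hs : MeasurableSet {ω | ξ v i ω = 1} := hξm v i (measurableSet_singleton 1)
    rw [ae_iff]
    have h2 : {ω | ¬ ξ v i ω = 1} = {ω | ξ v i ω = 1}ᶜ := rfl
    rw [h2, measure_compl hs (measure_ne_top μ _), hξq v i]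
    simp
  have hη1 : ∀ v j, ∀ᵐ ω ∂μ, η v j ω = 1 := by
    intro v j
    have hs : MeasurableSet {ω | η v j ω = 1} := hηm v j (measurableSet_singleton 1)
    rw [ae_iff]
    have h2 : {ω | ¬ η v j ω = 1} = {ω | η v j ω = 1}ᶜ := rfl
    rw [h2, measure_compl hs (measure_ne_top μ _), hηq v j]
    simp
  set X : ι → Ω → ℝ := fun v ω => ((a v : ℝ) * (b v : ℝ)) * U v ω with hX
  -- a.e. equality of the estimator with the simplified form
  have hfeq : (fun ω => (1 / (ε * 1 * 1)) *
        ∑ v, U v ω * (∑ i, ξ v i ω) * (∑ j, η v j ω)) =ᵐ[μ]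
      (fun ω => (1 / ε) * ∑ v, X v ω) := by
    have hξae : ∀ᵐ ω ∂μ, ∀ v i, ξ v i ω = 1 :=
      ae_all_iff.2 fun v => ae_all_iff.2 (hξ1 v)
    have hηae : ∀ᵐ ω ∂μ, ∀ v j, η v j ω = 1 :=
      ae_all_iff.2 fun v => ae_all_iff.2 (hη1 v)
    filter_upwards [hξae, hηae] with ω h1 h2
    simp only [mul_one, hX]
    congr 1
    refine Finset.sum_congr rfl fun v _ => ?_
    have e1 : (∑ i, ξ v i ω) = (a v : ℝ) := by
      rw [Finset.sum_congr rfl fun i _ => h1 v i]; simp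
    have e2 : (∑ j, η v j ω) = (b v : ℝ) := by
      rw [Finset.sum_congr rfl fun j _ => h2 v j]; simp
    rw [e1, e2]; ring
  have hUmem : ∀ v, MemLp (U v) 2 μ := fun v => bernoulli_memℒp' (hUm v) (hU01 v)
  have hXmem : ∀ v, MemLp (X v) 2 μ := fun v => (hUmem v).const_mul _
  -- independence of the X v
  have hXindep : Set.Pairwise ↑(Finset.univ : Finset ι)
      fun v w => IndepFun (X v) (X w) μ := by
    intro v _ w _ hvw
    have h := hIndep.indepFun (i := Sum.inl v) (j := Sum.inl w)
      (fun h => hvw (Sum.inl.injEq .. ▸ h))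
    have h' := h.comp (φ := fun x => ((a v : ℝ) * (b v : ℝ)) * x)
      (ψ := fun x => ((a w : ℝ) * (b w : ℝ)) * x)
      (measurable_const_mul _) (measurable_const_mul _)
    exact h'
  -- compute the variance
  have hsum : (fun ω => ∑ v, X v ω) = ∑ v, X v := by
    ext ω; simp
  have hvar : variance (fun ω => (1 / (ε * 1 * 1)) *
        ∑ v, U v ω * (∑ i, ξ v i ω) * (∑ j, η v j ω)) μ
      = (1 / ε - 1) * (∑ v, (a v : ℝ) * (b v : ℝ) ^ 2) := by
    rw [variance_congr_ae' hfeq, variance_const_mul, hsum,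
      IndepFun.variance_sum (fun v _ => hXmem v) hXindep]
    have hU : ∀ v, variance (U v) μ = ε - ε ^ 2 := fun v =>
      bernoulli_variance' (hUm v) (hU01 v) hε.le (hUp v)
    have hXv : ∀ v, variance (X v) μ = ((a v : ℝ) * (b v : ℝ)) ^ 2 * (ε - ε ^ 2) := by
      intro v
      rw [hX]
      rw [variance_const_mul ((a v : ℝ) * (b v : ℝ)) (U v) μ, hU v]
    rw [Finset.sum_congr rfl fun v _ => hXv v, Finset.mul_sum, Finset.mul_sum]
    refine Finset.sum_congr rfl fun v _ => ?_
    have haa : (a v : ℝ) ^ 2 = (a v : ℝ) := by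
      rcases Nat.le_one_iff_eq_zero_or_eq_one.1 (ha v) with h | h <;> simp [h]
    have hkey : (1 / ε) ^ 2 * (ε - ε ^ 2) = 1 / ε - 1 := by
      field_simp
    rw [mul_pow, haa]
    linear_combination ((a v : ℝ) * (b v : ℝ) ^ 2) * hkey
  refine ⟨hvar, fun c hb => ?_⟩
  rw [hvar]
  have h1 : (0:ℝ) ≤ 1 / ε - 1 := by
    rw [sub_nonneg]
    exact one_le_one_div hε hε1
  calc (1 / ε - 1) * (∑ v, (a v : ℝ) * (b v : ℝ) ^ 2)
      ≤ (1 / ε - 1) * ((c : ℝ) * ∑ v, (a v : ℝ) * (b v : ℝ)) := by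
        apply mul_le_mul_of_nonneg_left _ h1
        rw [Finset.mul_sum]
        refine Finset.sum_le_sum fun v _ => ?_
        have hbc : (b v : ℝ) ≤ (c : ℝ) := Nat.cast_le.2 (hb v)
        have hb0 : (0:ℝ) ≤ (b v : ℝ) := Nat.cast_nonneg _
        have ha0 : (0:ℝ) ≤ (a v : ℝ) := Nat.cast_nonneg _
        nlinarith [mul_nonneg ha0 hb0]
    _ = (c : ℝ) * (1 / ε - 1) * (∑ v, (a v : ℝ) * (b v : ℝ)) := by ring
end
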